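/- Let f, g be nonnegative in L²(Ω, ν) with ν a probability measure, c₂ > 0, and suppose ‖f‖_{L²(ν)}, ‖g‖_{L²(ν)} ≤ R. Then |1 − cSSIM(f,g)| ≥ (1/(4R² + c₂))·(‖f − g‖²_{L²(ν)} − (μ_f − μ_g)²). -/

import Mathlib

set_option maxHeartbeats 1000000


open MeasureTheory

noncomputable def mu {α : Type*} [MeasurableSpace α] (ν : Measure α) (f : α → ℝ) : ℝ :=
  ∫ x, f x ∂ν

noncomputable def cov {α : Type*} [MeasurableSpace α] (ν : Measure α) (f g : α → ℝ) : ℝ :=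
  ∫ x, (f x - mu ν f) * (g x - mu ν g) ∂ν

noncomputable def Mlum {α : Type*} [MeasurableSpace α] (ν : Measure α) (f g : α → ℝ)
    (c1 : ℝ) : ℝ :=
  (2 * mu ν f * mu ν g + c1) / ((mu ν f) ^ 2 + (mu ν g) ^ 2 + c1)

noncomputable def Sstr {α : Type*} [MeasurableSpace α] (ν : Measure α) (f g : α → ℝ)
    (c2 : ℝ) : ℝ :=
  (2 * cov ν f g + c2) / (cov ν f f + cov ν g g + c2)

noncomputable def cSSIM {α : Type*} [MeasurableSpace α] (ν : Measure α) (f g : α → ℝ)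
    (c1 c2 : ℝ) : ℝ :=
  Mlum ν f g c1 * Sstr ν f g c2

lemma integrable_mul_of_memL2 {α : Type*} [MeasurableSpace α] {ν : Measure α}
    {f g : α → ℝ} (hf : MemLp f 2 ν) (hg : MemLp g 2 ν) :
    Integrable (fun x => f x * g x) ν := by
  have h1 : Integrable (fun x => (f x + g x) ^ 2) ν := (hf.add hg).integrable_sq
  have h2 : Integrable (fun x => f x ^ 2) ν := hf.integrable_sq
  have h3 : Integrable (fun x => g x ^ 2) ν := hg.integrable_sq
  have : (fun x => f x * g x) =
      fun x => ((f x + g x) ^ 2 - f x ^ 2 - g x ^ 2) / 2 := by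
    funext x; ring
  rw [this]
  exact ((h1.sub h2).sub h3).div_const 2

lemma cov_eq {α : Type*} [MeasurableSpace α] (ν : Measure α) [IsProbabilityMeasure ν]
    (f g : α → ℝ) (hf : MemLp f 2 ν) (hg : MemLp g 2 ν) :
    cov ν f g = (∫ x, f x * g x ∂ν) - mu ν f * mu ν g := by
  have hfi : Integrable f ν := hf.integrable one_le_two
  have hgi : Integrable g ν := hg.integrable one_le_two
  have hfg := integrable_mul_of_memL2 hf hg
  unfold cov mu
  have h : ∀ x, (f x - ∫ x, f x ∂ν) * (g x - ∫ x, g x ∂ν) =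
      f x * g x - ((∫ x, f x ∂ν) * g x + (∫ x, g x ∂ν) * f x)
        + (∫ x, f x ∂ν) * (∫ x, g x ∂ν) := by
    intro x; ring
  simp_rw [h]
  have i1 : Integrable (fun x => (∫ x, f x ∂ν) * g x + (∫ x, g x ∂ν) * f x) ν :=
    (hgi.const_mul _).add (hfi.const_mul _)
  have i2 : Integrable
      (fun x => f x * g x - ((∫ x, f x ∂ν) * g x + (∫ x, g x ∂ν) * f x)) ν :=
    hfg.sub i1
  rw [integral_add i2 (integrable_const _), integral_sub hfg i1,
    integral_add (hgi.const_mul _) (hfi.const_mul _),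
    integral_const_mul, integral_const_mul, integral_const]
  simp
  ring

lemma cov_self_nonneg {α : Type*} [MeasurableSpace α] (ν : Measure α)
    (f : α → ℝ) : 0 ≤ cov ν f f := by
  unfold cov
  exact integral_nonneg fun x => mul_self_nonneg _

lemma alg_ineq (a b A B C c1 c2 R : ℝ) (ha0 : 0 ≤ a) (hb0 : 0 ≤ b)
    (hA0 : 0 ≤ A) (hB0 : 0 ≤ B) (hc1 : 0 < c1) (hc2 : 0 < c2) (hR : 0 < R)
    (hE0 : 0 ≤ A + B - 2 * C) (hAB : A + B ≤ 2 * R ^ 2)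
    (hEub : A + B - 2 * C ≤ 4 * R ^ 2) :
    (1 / (4 * R ^ 2 + c2)) * (A + B - 2 * C) ≤
      1 - (2 * a * b + c1) / (a ^ 2 + b ^ 2 + c1) *
        ((2 * C + c2) / (A + B + c2)) := by
  have hD1 : (0:ℝ) < a ^ 2 + b ^ 2 + c1 := by positivity
  have hD2 : (0:ℝ) < A + B + c2 := by linarith
  have hD3 : (0:ℝ) < 4 * R ^ 2 + c2 := by positivity
  have hN10 : (0:ℝ) ≤ 2 * a * b + c1 := by nlinarith
  have hN1le : 2 * a * b + c1 ≤ a ^ 2 + b ^ 2 + c1 := by nlinarith [sq_nonneg (a - b)]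
  rw [div_mul_div_comm, one_div_mul_eq_div,
    sub_div' (by positivity : (a ^ 2 + b ^ 2 + c1) * (A + B + c2) ≠ 0),
    div_le_div_iff₀ hD3 (by positivity)]
  ring_nf
  rcases le_or_gt 0 (2 * C + c2) with hpos | hneg
  · have k1 : (2 * a * b + c1) * (2 * C + c2) ≤
        (a ^ 2 + b ^ 2 + c1) * (2 * C + c2) :=
      mul_le_mul_of_nonneg_right hN1le hpos
    have k2 : (A + B - 2 * C) * (A + B + c2) ≤
        (A + B - 2 * C) * (4 * R ^ 2 + c2) :=
      mul_le_mul_of_nonneg_left (by linarith) hE0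
    nlinarith [mul_le_mul_of_nonneg_left k2 hD1.le,
      mul_le_mul_of_nonneg_right (show (a ^ 2 + b ^ 2 + c1) * (A + B - 2 * C) ≤
        (a ^ 2 + b ^ 2 + c1) * (A + B + c2) - (2 * a * b + c1) * (2 * C + c2) by
          nlinarith) hD3.le]
  · have k1 : (2 * a * b + c1) * (2 * C + c2) ≤ 0 :=
      mul_nonpos_of_nonneg_of_nonpos hN10 hneg.le
    have k2 : A + B - 2 * C ≤ 4 * R ^ 2 + c2 := by linarith
    have k3 : (A + B - 2 * C) * ((a ^ 2 + b ^ 2 + c1) * (A + B + c2)) ≤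
        (4 * R ^ 2 + c2) * ((a ^ 2 + b ^ 2 + c1) * (A + B + c2)) :=
      mul_le_mul_of_nonneg_right k2 (by positivity)
    nlinarith [mul_le_mul_of_nonneg_right
      (show (a ^ 2 + b ^ 2 + c1) * (A + B + c2) ≤
        (a ^ 2 + b ^ 2 + c1) * (A + B + c2) - (2 * a * b + c1) * (2 * C + c2) by
          linarith) hD3.le]

theorem stmt_10 {α : Type*} [MeasurableSpace α] (ν : Measure α) [IsProbabilityMeasure ν]
    (f g : α → ℝ) (hf : MemLp f 2 ν) (hg : MemLp g 2 ν)
    (hf0 : 0 ≤ᵐ[ν] f) (hg0 : 0 ≤ᵐ[ν] g) (c1 c2 R : ℝ)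
    (hc1 : 0 < c1) (hc2 : 0 < c2) (hR : 0 < R)
    (hfR : Real.sqrt (∫ x, (f x) ^ 2 ∂ν) ≤ R)
    (hgR : Real.sqrt (∫ x, (g x) ^ 2 ∂ν) ≤ R) :
    (1 / (4 * R ^ 2 + c2)) * ((∫ x, (f x - g x) ^ 2 ∂ν) - (mu ν f - mu ν g) ^ 2) ≤
      |1 - cSSIM ν f g c1 c2| := by
  have hfi : Integrable f ν := hf.integrable one_le_two
  have hgi : Integrable g ν := hg.integrable one_le_two
  have hf2 : Integrable (fun x => f x ^ 2) ν := hf.integrable_sq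
  have hg2 : Integrable (fun x => g x ^ 2) ν := hg.integrable_sq
  have hfg : Integrable (fun x => f x * g x) ν := integrable_mul_of_memL2 hf hg
  have hIf2 : (0:ℝ) ≤ ∫ x, f x ^ 2 ∂ν := integral_nonneg fun x => sq_nonneg _
  have hIg2 : (0:ℝ) ≤ ∫ x, g x ^ 2 ∂ν := integral_nonneg fun x => sq_nonneg _
  have hfR2 : (∫ x, f x ^ 2 ∂ν) ≤ R ^ 2 := by
    have := Real.sq_sqrt hIf2
    nlinarith [Real.sqrt_nonneg (∫ x, f x ^ 2 ∂ν)]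
  have hgR2 : (∫ x, g x ^ 2 ∂ν) ≤ R ^ 2 := by
    have := Real.sq_sqrt hIg2
    nlinarith [Real.sqrt_nonneg (∫ x, g x ^ 2 ∂ν)]
  have ha0 : 0 ≤ mu ν f := integral_nonneg_of_ae hf0
  have hb0 : 0 ≤ mu ν g := integral_nonneg_of_ae hg0
  have hCff : cov ν f f = (∫ x, f x * f x ∂ν) - mu ν f * mu ν f := cov_eq ν f f hf hf
  have hCgg : cov ν g g = (∫ x, g x * g x ∂ν) - mu ν g * mu ν g := cov_eq ν g g hg hg
  have hCfg : cov ν f g = (∫ x, f x * g x ∂ν) - mu ν f * mu ν g := cov_eq ν f g hf hg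
  have hff : (∫ x, f x * f x ∂ν) = ∫ x, f x ^ 2 ∂ν := by
    congr 1; funext x; ring
  have hgg : (∫ x, g x * g x ∂ν) = ∫ x, g x ^ 2 ∂ν := by
    congr 1; funext x; ring
  have hA0 : 0 ≤ cov ν f f := cov_self_nonneg ν f
  have hB0 : 0 ≤ cov ν g g := cov_self_nonneg ν g
  have hexp : (∫ x, (f x - g x) ^ 2 ∂ν) =
      (∫ x, f x ^ 2 ∂ν) - 2 * (∫ x, f x * g x ∂ν) + ∫ x, g x ^ 2 ∂ν := by
    have h : ∀ x, (f x - g x) ^ 2 = f x ^ 2 - 2 * (f x * g x) + g x ^ 2 := by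
      intro x; ring
    simp_rw [h]
    have i1 : Integrable (fun x => 2 * (f x * g x)) ν := hfg.const_mul 2
    have i2 : Integrable (fun x => f x ^ 2 - 2 * (f x * g x)) ν := hf2.sub i1
    rw [integral_add i2 hg2, integral_sub hf2 i1, integral_const_mul]
  have hkey : (∫ x, (f x - g x) ^ 2 ∂ν) - (mu ν f - mu ν g) ^ 2 =
      cov ν f f + cov ν g g - 2 * cov ν f g := by
    rw [hexp, hCff, hCgg, hCfg, hff, hgg]; ring
  have hE0 : 0 ≤ cov ν f f + cov ν g g - 2 * cov ν f g := by
    rw [← hkey]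
    have hsub : MemLp (f - g) 2 ν := hf.sub hg
    have h1 : cov ν (f - g) (f - g) =
        (∫ x, (f - g) x * (f - g) x ∂ν) - mu ν (f - g) * mu ν (f - g) :=
      cov_eq ν (f - g) (f - g) hsub hsub
    have h2 : (∫ x, (f - g) x * (f - g) x ∂ν) = ∫ x, (f x - g x) ^ 2 ∂ν := by
      congr 1; funext x; simp [Pi.sub_apply]; ring
    have h3 : mu ν (f - g) = mu ν f - mu ν g := by
      have : (fun x => (f - g) x) = fun x => f x - g x := rfl
      unfold mu
      rw [this, integral_sub hfi hgi]
    have h4 : 0 ≤ cov ν (f - g) (f - g) := cov_self_nonneg ν (f - g)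
    rw [h1, h2, h3] at h4
    nlinarith
  have hAB : cov ν f f + cov ν g g ≤ 2 * R ^ 2 := by
    have h1 : cov ν f f ≤ R ^ 2 := by rw [hCff, hff]; nlinarith
    have h2 : cov ν g g ≤ R ^ 2 := by rw [hCgg, hgg]; nlinarith
    linarith
  have hEub : cov ν f f + cov ν g g - 2 * cov ν f g ≤ 4 * R ^ 2 := by
    rw [← hkey]
    have hmg : (∫ x, (-2) * (f x * g x) ∂ν) ≤ ∫ x, f x ^ 2 + g x ^ 2 ∂ν := by
      refine integral_mono (hfg.const_mul (-2)) (hf2.add hg2) fun x => ?_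
      nlinarith [sq_nonneg (f x + g x)]
    rw [integral_const_mul, integral_add hf2 hg2] at hmg
    have hle : (∫ x, (f x - g x) ^ 2 ∂ν) ≤ 4 * R ^ 2 := by
      rw [hexp]; linarith
    linarith [sq_nonneg (mu ν f - mu ν g)]
  have hmain := alg_ineq (mu ν f) (mu ν g) (cov ν f f) (cov ν g g) (cov ν f g)
    c1 c2 R ha0 hb0 hA0 hB0 hc1 hc2 hR hE0 hAB hEub
  have hssim : cSSIM ν f g c1 c2 =
      (2 * mu ν f * mu ν g + c1) / ((mu ν f) ^ 2 + (mu ν g) ^ 2 + c1) *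
        ((2 * cov ν f g + c2) / (cov ν f f + cov ν g g + c2)) := rfl
  calc (1 / (4 * R ^ 2 + c2)) *
        ((∫ x, (f x - g x) ^ 2 ∂ν) - (mu ν f - mu ν g) ^ 2)
      = (1 / (4 * R ^ 2 + c2)) *
        (cov ν f f + cov ν g g - 2 * cov ν f g) := by rw [hkey]
    _ ≤ 1 - cSSIM ν f g c1 c2 := by rw [hssim]; exact hmain
    _ ≤ |1 - cSSIM ν f g c1 c2| := le_abs_self _
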